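/- arXiv:1403.6108 — 2 statements merged into one kernel-verified Lean document; each statement's English description precedes it below -/
import Mathlib

section
/- Let c, d ∈ ℝ, A₀ > 0, and let F : (A₀, ∞) → ℝ satisfy F(A) = (1/2)A − π log A + c − d A^(−1/2) + ρ(A) where ρ(A) = o(A^(−1/2)) as A → ∞. Suppose A : (V₀, ∞) → (A₀, ∞) satisfies F(A(V)) = V for all V > V₀ and A(V) → ∞ as V → ∞. Then A(V) = 2V + 2π log(2V) − 2c + √2 · d · V^(−1/2) + o(V^(−1/2)) as V → ∞. (Applied with c = V(M,g) + π(1 + log π) and d = 8π^(3/2)·𝐦, this inverts the volume expansion of the isoperimetric profile and yields A_g(V) = A_ḡ(V) − 2V(M,g) + 8√2 π^(3/2) 𝐦 V^(−1/2) + o(V^(−1/2)).) -/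
open Real Filter Asymptotics Topology

lemma my_rpow_isLittleO_rpow {p q : ℝ} (h : p < q) :
    (fun x : ℝ => x ^ p) =o[atTop] fun x : ℝ => x ^ q := by
  rw [isLittleO_iff_tendsto']
  · refine (tendsto_rpow_neg_atTop (by linarith : 0 < q - p)).congr' ?_
    filter_upwards [eventually_gt_atTop (0:ℝ)] with x hx
    rw [neg_sub, Real.rpow_sub hx]
  · filter_upwards [eventually_gt_atTop (0:ℝ)] with x hx h0
    exact absurd h0 (Real.rpow_pos_of_pos hx q).ne'

/-- inversion of the volume expansion. If
`F(A) = A/2 - π log A + c - d A^(-1/2) + o(A^(-1/2))` and `A(V)` satisfies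
`F(A(V)) = V` with `A(V) → ∞`, then
`A(V) = 2V + 2π log(2V) - 2c + √2 d V^(-1/2) + o(V^(-1/2))` as `V → ∞`. -/
theorem profile_inversion (c d A₀ V₀ : ℝ) (hA₀ : 0 < A₀) (F ρ : ℝ → ℝ)
    (hF : ∀ A > A₀, F A = (1 / 2) * A - π * Real.log A + c - d * A ^ (-(1:ℝ)/2) + ρ A)
    (hρ : ρ =o[atTop] fun A : ℝ => A ^ (-(1:ℝ)/2))
    (A : ℝ → ℝ)
    (hrange : ∀ V > V₀, A₀ < A V)
    (hinv : ∀ V > V₀, F (A V) = V)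
    (htend : Tendsto A atTop atTop) :
    (fun V => A V - (2 * V + 2 * π * Real.log (2 * V) - 2 * c
        + Real.sqrt 2 * d * V ^ (-(1:ℝ)/2)))
      =o[atTop] fun V : ℝ => V ^ (-(1:ℝ)/2) := by
  set g : ℝ → ℝ := fun a => 2*π*Real.log a - 2*c + 2*d*a ^ (-(1:ℝ)/2) - 2*ρ a with hgdef
  -- g = o(a^(1/2))
  have hg12 : g =o[atTop] fun a : ℝ => a ^ ((1:ℝ)/2) := by
    have h1 : (fun a : ℝ => 2*π*Real.log a) =o[atTop] fun a : ℝ => a ^ ((1:ℝ)/2) :=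
      (isLittleO_log_rpow_atTop (by norm_num : (0:ℝ) < 1/2)).const_mul_left (2*π)
    have htop : Tendsto (fun a : ℝ => ‖a ^ ((1:ℝ)/2)‖) atTop atTop :=
      tendsto_abs_atTop_atTop.comp (tendsto_rpow_atTop (by norm_num : (0:ℝ) < 1/2))
    have h2 : (fun _ : ℝ => 2*c) =o[atTop] fun a : ℝ => a ^ ((1:ℝ)/2) :=
      isLittleO_const_left.2 (Or.inr htop)
    have h3 : (fun a : ℝ => 2*d*a ^ (-(1:ℝ)/2)) =o[atTop] fun a : ℝ => a ^ ((1:ℝ)/2) := by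
      have := my_rpow_isLittleO_rpow (by norm_num : (-(1:ℝ)/2) < (1:ℝ)/2)
      simpa [mul_assoc] using this.const_mul_left (2*d)
    have h4 : (fun a : ℝ => 2*ρ a) =o[atTop] fun a : ℝ => a ^ ((1:ℝ)/2) :=
      (hρ.trans (my_rpow_isLittleO_rpow (by norm_num : (-(1:ℝ)/2) < (1:ℝ)/2))).const_mul_left 2
    exact ((h1.sub h2).add h3).sub h4
  -- eventual identity A V = 2V + g (A V)
  have hid : ∀ᶠ V in atTop, A V = 2*V + g (A V) := by
    filter_upwards [eventually_gt_atTop V₀] with V hV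
    have hA := hrange V hV
    have h := hinv V hV
    rw [hF (A V) hA] at h
    simp only [hgdef]
    linarith
  -- A V / V → 2
  have hhalf : (fun x : ℝ => x ^ ((1:ℝ)/2)) =o[atTop] fun x : ℝ => x := by
    simpa [Real.rpow_one] using my_rpow_isLittleO_rpow (by norm_num : (1:ℝ)/2 < (1:ℝ))
  have hgid : g =o[atTop] fun a : ℝ => a := hg12.trans hhalf
  have hAo : (fun V => g (A V)) =o[atTop] A := hgid.comp_tendsto htend
  have hsub : (fun V => A V - 2*V) =o[atTop] A := by
    refine hAo.congr' ?_ EventuallyEq.rfl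
    filter_upwards [hid] with V h; linarith
  have hApos : ∀ᶠ V in atTop, 0 < A V := htend.eventually_gt_atTop 0
  have h2VA : Tendsto (fun V => 2*V / A V) atTop (𝓝 1) := by
    have h0 := hsub.tendsto_div_nhds_zero
    have : Tendsto (fun V => 1 - (A V - 2*V) / A V) atTop (𝓝 (1 - 0)) :=
      tendsto_const_nhds.sub h0
    rw [sub_zero] at this
    refine this.congr' ?_
    filter_upwards [hApos] with V hV
    field_simp
    ring
  have hAV2 : Tendsto (fun V => A V / V) atTop (𝓝 2) := by
    have hinv1 : Tendsto (fun V => (2*V / A V)⁻¹) atTop (𝓝 1) := by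
      simpa using h2VA.inv₀ one_ne_zero
    have : Tendsto (fun V => 2 * (2*V / A V)⁻¹) atTop (𝓝 (2*1)) :=
      hinv1.const_mul 2
    rw [mul_one] at this
    refine this.congr' ?_
    filter_upwards [hApos, eventually_gt_atTop (0:ℝ)] with V hA hV
    field_simp
  -- eventual bounds V ≤ A V ≤ 3V
  have hbnd : ∀ᶠ V in atTop, V ≤ A V ∧ A V ≤ 3*V := by
    have h1 : ∀ᶠ V in atTop, 1 < A V / V := hAV2.eventually (eventually_gt_nhds (by norm_num))
    have h2 : ∀ᶠ V in atTop, A V / V < 3 := hAV2.eventually (eventually_lt_nhds (by norm_num))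
    filter_upwards [h1, h2, eventually_gt_atTop (0:ℝ)] with V h1 h2 hV
    rw [lt_div_iff₀ hV] at h1
    rw [div_lt_iff₀ hV] at h2
    constructor <;> nlinarith
  -- (A V)^(-1/2) = O(V^(-1/2))
  have hbigO_neg : (fun V => (A V) ^ (-(1:ℝ)/2)) =O[atTop] fun V : ℝ => V ^ (-(1:ℝ)/2) := by
    refine IsBigO.of_bound 1 ?_
    filter_upwards [hbnd, eventually_gt_atTop (0:ℝ)] with V ⟨h1, _⟩ hV
    have hA : 0 < A V := lt_of_lt_of_le hV h1
    rw [Real.norm_eq_abs, Real.norm_eq_abs, abs_of_pos (Real.rpow_pos_of_pos hA _),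
      abs_of_pos (Real.rpow_pos_of_pos hV _), one_mul]
    exact Real.rpow_le_rpow_of_nonpos hV h1 (by norm_num)
  have hρA : (fun V => ρ (A V)) =o[atTop] fun V : ℝ => V ^ (-(1:ℝ)/2) :=
    (hρ.comp_tendsto htend).trans_isBigO hbigO_neg
  -- (A V)^(1/2) = O(V^(1/2)), hence A V - 2V = o(V^(1/2))
  have hhalfO : (fun V => (A V) ^ ((1:ℝ)/2)) =O[atTop] fun V : ℝ => V ^ ((1:ℝ)/2) := by
    refine IsBigO.of_bound (Real.sqrt 3) ?_
    filter_upwards [hbnd, eventually_gt_atTop (0:ℝ)] with V ⟨h1, h2⟩ hV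
    have hA : 0 < A V := lt_of_lt_of_le hV h1
    rw [Real.norm_eq_abs, Real.norm_eq_abs, abs_of_pos (Real.rpow_pos_of_pos hA _),
      abs_of_pos (Real.rpow_pos_of_pos hV _)]
    calc (A V) ^ ((1:ℝ)/2) ≤ (3*V) ^ ((1:ℝ)/2) :=
          Real.rpow_le_rpow hA.le h2 (by norm_num)
      _ = Real.sqrt 3 * V ^ ((1:ℝ)/2) := by
          rw [Real.mul_rpow (by norm_num) hV.le, Real.sqrt_eq_rpow]
  have hgAsmall : (fun V => g (A V)) =o[atTop] fun V : ℝ => V ^ ((1:ℝ)/2) :=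
    (hg12.comp_tendsto htend).trans_isBigO hhalfO
  have hh : (fun V => A V - 2*V) =o[atTop] fun V : ℝ => V ^ ((1:ℝ)/2) := by
    refine hgAsmall.congr' ?_ EventuallyEq.rfl
    filter_upwards [hid] with V h; linarith
  -- ratio term
  have hre : (fun V => A V / (2*V) - 1) =o[atTop] fun V : ℝ => V ^ (-(1:ℝ)/2) := by
    have hmul : (fun V => (A V - 2*V) * (2*V)⁻¹) =o[atTop]
        fun V : ℝ => V ^ ((1:ℝ)/2) * (2*V)⁻¹ :=
      hh.mul_isBigO (isBigO_refl _ _)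
    have hO : (fun V : ℝ => V ^ ((1:ℝ)/2) * (2*V)⁻¹) =O[atTop]
        fun V : ℝ => V ^ (-(1:ℝ)/2) := by
      refine IsBigO.of_bound 1 ?_
      filter_upwards [eventually_gt_atTop (0:ℝ)] with V hV
      have key : V ^ ((1:ℝ)/2) * (2*V)⁻¹ = (1/2) * V ^ (-(1:ℝ)/2) := by
        rw [show (-(1:ℝ)/2) = (1:ℝ)/2 + (-1) by norm_num, Real.rpow_add hV,
          Real.rpow_neg_one]
        field_simp
      rw [key, Real.norm_eq_abs, Real.norm_eq_abs, abs_mul,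
        abs_of_pos (Real.rpow_pos_of_pos hV (-(1:ℝ)/2)),
        abs_of_pos (by norm_num : (0:ℝ) < 1/2), one_mul]
      nlinarith [Real.rpow_pos_of_pos hV (-(1:ℝ)/2)]
    refine (hmul.trans_isBigO hO).congr' ?_ EventuallyEq.rfl
    filter_upwards [eventually_gt_atTop (0:ℝ)] with V hV
    field_simp
  have hr1 : Tendsto (fun V => A V / (2*V)) atTop (𝓝 1) := by
    have : Tendsto (fun V => (A V / V) / 2) atTop (𝓝 (2/2)) := hAV2.div_const 2
    norm_num at this
    refine this.congr' ?_
    filter_upwards [eventually_gt_atTop (0:ℝ)] with V hV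
    rw [div_div, mul_comm V 2]
  -- log term
  have hL : (fun V => Real.log (A V) - Real.log (2*V)) =o[atTop]
      fun V : ℝ => V ^ (-(1:ℝ)/2) := by
    have hOlog : (fun V => Real.log (A V) - Real.log (2*V)) =O[atTop]
        fun V => A V / (2*V) - 1 := by
      refine IsBigO.of_bound 2 ?_
      have hgt : ∀ᶠ V in atTop, (1:ℝ)/2 < A V / (2*V) :=
        hr1.eventually (eventually_gt_nhds (by norm_num))
      filter_upwards [hgt, hApos, eventually_gt_atTop (0:ℝ)] with V hgt hA hV
      have h2V : (0:ℝ) < 2*V := by linarith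
      have hr0 : 0 < A V / (2*V) := by positivity
      set r := A V / (2*V) with hrdef
      have hlog : Real.log (A V) - Real.log (2*V) = Real.log r := by
        rw [hrdef, Real.log_div hA.ne' h2V.ne']
      rw [hlog, Real.norm_eq_abs, Real.norm_eq_abs]
      rcases le_total 1 r with hr | hr
      · rw [abs_of_nonneg (Real.log_nonneg hr), abs_of_nonneg (by linarith : (0:ℝ) ≤ r - 1)]
        have := Real.log_le_sub_one_of_pos hr0
        linarith
      · rw [abs_of_nonpos (Real.log_nonpos hr0.le hr),
          abs_of_nonpos (by linarith : r - 1 ≤ 0)]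
        have hinv : Real.log r⁻¹ ≤ r⁻¹ - 1 := Real.log_le_sub_one_of_pos (by positivity)
        rw [Real.log_inv] at hinv
        have hrr : r⁻¹ - 1 ≤ 2*(1 - r) := by
          rw [inv_eq_one_div, div_sub' hr0.ne', div_le_iff₀ hr0]
          nlinarith
        linarith
    exact hOlog.trans_isLittleO hre
  -- rpow difference term
  have hD : (fun V => (A V) ^ (-(1:ℝ)/2) - (2*V) ^ (-(1:ℝ)/2)) =o[atTop]
      fun V : ℝ => V ^ (-(1:ℝ)/2) := by
    have hDO : (fun V => (A V) ^ (-(1:ℝ)/2) - (2*V) ^ (-(1:ℝ)/2)) =O[atTop]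
        fun V : ℝ => V ^ (-(1:ℝ)) := by
      refine IsBigO.of_bound (1/2) ?_
      filter_upwards [hh.def one_pos, hbnd, eventually_ge_atTop (1:ℝ)] with V hhb ⟨h1, _⟩ hV1
      have hV : (0:ℝ) < V := by linarith
      have hA : 0 < A V := lt_of_lt_of_le hV h1
      have h2V : (0:ℝ) < 2*V := by linarith
      set s := V ^ ((1:ℝ)/2) with hsdef
      have hs : 0 < s := Real.rpow_pos_of_pos hV _
      set x := (A V) ^ ((1:ℝ)/2) with hxdef
      set y := (2*V) ^ ((1:ℝ)/2) with hydef
      have hx : 0 < x := Real.rpow_pos_of_pos hA _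
      have hy : 0 < y := Real.rpow_pos_of_pos h2V _
      have hxs : s ≤ x := Real.rpow_le_rpow hV.le h1 (by norm_num)
      have hys : s ≤ y := Real.rpow_le_rpow hV.le (by linarith) (by norm_num)
      have hx2 : x * x = A V := by
        rw [hxdef, ← Real.rpow_add hA]; norm_num
      have hy2 : y * y = 2*V := by
        rw [hydef, ← Real.rpow_add h2V]; norm_num
      have hs2 : s * s = V := by
        rw [hsdef, ← Real.rpow_add hV]; norm_num
      have hxinv : (A V) ^ (-(1:ℝ)/2) = x⁻¹ := by
        rw [hxdef, ← Real.rpow_neg hA.le]; norm_num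
      have hyinv : (2*V) ^ (-(1:ℝ)/2) = y⁻¹ := by
        rw [hydef, ← Real.rpow_neg h2V.le]; norm_num
      have hident : x⁻¹ - y⁻¹ = (y*y - x*x) / (x*y*(x+y)) := by
        field_simp; ring
      have hnum : |y*y - x*x| ≤ s := by
        rw [hy2, hx2]
        have : ‖A V - 2*V‖ ≤ 1 * ‖V ^ ((1:ℝ)/2)‖ := hhb
        rw [Real.norm_eq_abs, Real.norm_eq_abs, one_mul, abs_of_pos hs] at this
        rw [abs_sub_comm]; exact this
      have hden : 2 * (s * s * s) ≤ x*y*(x+y) := by nlinarith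
      have hVnorm : |V ^ (-(1:ℝ))| = (s*s)⁻¹ := by
        rw [abs_of_pos (Real.rpow_pos_of_pos hV _), hs2, Real.rpow_neg_one]
      rw [hxinv, hyinv, hident, Real.norm_eq_abs, Real.norm_eq_abs, abs_div,
        abs_of_pos (by positivity : (0:ℝ) < x*y*(x+y)), hVnorm]
      rw [div_le_iff₀ (by positivity)]
      calc |y*y - x*x| ≤ s := hnum
        _ = 1/2 * ((s*s)⁻¹ * (2*(s*s*s))) := by field_simp
        _ ≤ 1/2 * ((s*s)⁻¹ * (x*y*(x+y))) := by gcongr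
        _ = 1/2 * (s*s)⁻¹ * (x*y*(x+y)) := by ring
    exact hDO.trans_isLittleO (my_rpow_isLittleO_rpow (by norm_num : (-(1:ℝ)) < -(1:ℝ)/2))
  -- assemble
  have hsum : (fun V => 2*π*(Real.log (A V) - Real.log (2*V))
      + 2*d*((A V) ^ (-(1:ℝ)/2) - (2*V) ^ (-(1:ℝ)/2)) - 2*ρ (A V))
      =o[atTop] fun V : ℝ => V ^ (-(1:ℝ)/2) :=
    ((hL.const_mul_left (2*π)).add (hD.const_mul_left (2*d))).sub (hρA.const_mul_left 2)
  refine hsum.congr' ?_ EventuallyEq.rfl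
  filter_upwards [hid, eventually_gt_atTop (0:ℝ)] with V hidV hV
  have h2v : (2*V) ^ (-(1:ℝ)/2) = 2 ^ (-(1:ℝ)/2) * V ^ (-(1:ℝ)/2) :=
    Real.mul_rpow (by norm_num) hV.le
  have h22 : (2:ℝ) * 2 ^ (-(1:ℝ)/2) = Real.sqrt 2 := by
    rw [Real.sqrt_eq_rpow]
    nth_rewrite 1 [← Real.rpow_one (2:ℝ)]
    rw [← Real.rpow_add two_pos]
    norm_num
  have hsq : Real.sqrt 2 * d * V ^ (-(1:ℝ)/2) = 2*d*(2*V) ^ (-(1:ℝ)/2) := by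
    rw [h2v, ← h22]; ring
  simp only [hgdef] at hidV
  linarith [hsq]
end

section
/- Let A₀ > 0 and let V : (A₀, ∞) → ℝ be convex and strictly increasing. Suppose: (i) for every Â > A₀ there exist δ > 0 and a continuously differentiable function f : (Â − δ, Â + δ) → ℝ with f ≤ V on (Â − δ, Â + δ), f(Â) = V(Â), f' > 0, the function A ↦ f'(A)^(−2) differentiable at Â, and (d/dA)[f'(A)^(−2)] at A = Â is ≤ −24π Â^(−2); and (ii) V'(A)^(−2) → 4 as A → ∞ along points of differentiability of V. Then for almost every A > A₀ (in particular at every point of differentiability of V that is also a Lebesgue point of V'^(−2)), one has V'(A)^(−2) ≥ 4 + 24π A^(−1). -/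
open Real MeasureTheory Set Filter Topology

namespace BDI

variable (A₀ : ℝ) (V : ℝ → ℝ)

def slopes (x : ℝ) : Set ℝ :=
  {s | ∃ y z : ℝ, x < y ∧ A₀ < y ∧ y < z ∧ s = (V z - V y) / (z - y)}

noncomputable def M (x : ℝ) : ℝ := sInf (slopes A₀ V x)

variable {A₀ V}

lemma slopes_nonempty (x : ℝ) : (slopes A₀ V x).Nonempty :=
  ⟨_, max x A₀ + 1, max x A₀ + 2,
    lt_add_of_le_of_pos (le_max_left _ _) one_pos,
    lt_add_of_le_of_pos (le_max_right _ _) one_pos, by linarith [le_max_left x A₀], rfl⟩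

lemma slopes_nonneg (hmono : StrictMonoOn V (Set.Ioi A₀)) {x s : ℝ}
    (hs : s ∈ slopes A₀ V x) : 0 ≤ s := by
  obtain ⟨y, z, _, hy, hyz, rfl⟩ := hs
  have : V y < V z := hmono (mem_Ioi.2 hy) (mem_Ioi.2 (hy.trans hyz)) hyz
  exact div_nonneg (by linarith) (by linarith)

lemma bddBelow_slopes (hmono : StrictMonoOn V (Set.Ioi A₀)) (x : ℝ) :
    BddBelow (slopes A₀ V x) :=
  ⟨0, fun _ hs => slopes_nonneg hmono hs⟩

lemma M_mono (hmono : StrictMonoOn V (Set.Ioi A₀)) : Monotone (M A₀ V) := by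
  intro u v huv
  apply csInf_le_csInf (bddBelow_slopes hmono u) (slopes_nonempty v)
  rintro s ⟨y, z, hy1, hy2, hyz, rfl⟩
  exact ⟨y, z, lt_of_le_of_lt huv hy1, hy2, hyz, rfl⟩

lemma M_nonneg (hmono : StrictMonoOn V (Set.Ioi A₀)) (x : ℝ) : 0 ≤ M A₀ V x :=
  le_csInf (slopes_nonempty x) fun _ hs => slopes_nonneg hmono hs

lemma star_right (hconv : ConvexOn ℝ (Set.Ioi A₀) V) {x z : ℝ}
    (hx : A₀ < x) (hxz : x < z) : V z - V x ≤ M A₀ V z * (z - x) := by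
  have hz : A₀ < z := hx.trans hxz
  have hslope : (V z - V x) / (z - x) ≤ M A₀ V z := by
    apply le_csInf (slopes_nonempty z)
    rintro s ⟨y, w, hy1, hy2, hyw, rfl⟩
    calc (V z - V x) / (z - x) ≤ (V y - V z) / (y - z) :=
          hconv.slope_mono_adjacent (mem_Ioi.2 hx) (mem_Ioi.2 hy2) hxz hy1
      _ ≤ (V w - V y) / (w - y) :=
          hconv.slope_mono_adjacent (mem_Ioi.2 hz) (mem_Ioi.2 (hy2.trans hyw)) hy1 hyw
  calc V z - V x = (V z - V x) / (z - x) * (z - x) := by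
        rw [div_mul_cancel₀ _ (by linarith : z - x ≠ 0)]
    _ ≤ M A₀ V z * (z - x) := mul_le_mul_of_nonneg_right hslope (by linarith)

lemma star_left (hconv : ConvexOn ℝ (Set.Ioi A₀) V)
    (hmono : StrictMonoOn V (Set.Ioi A₀)) {x z : ℝ}
    (hx : A₀ < x) (hxz : x < z) : M A₀ V x * (z - x) ≤ V z - V x := by
  have hcont : ContinuousAt V x :=
    (hconv.continuousOn isOpen_Ioi).continuousAt (isOpen_Ioi.mem_nhds hx)
  have hslope : M A₀ V x ≤ (V z - V x) / (z - x) := by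
    have htend : Tendsto (fun y => (V z - V y) / (z - y)) (𝓝[>] x)
        (𝓝 ((V z - V x) / (z - x))) := by
      apply Tendsto.div
      · exact (tendsto_const_nhds.sub (hcont.tendsto.comp nhdsWithin_le_nhds))
      · exact tendsto_const_nhds.sub nhdsWithin_le_nhds
      · linarith
    apply ge_of_tendsto htend
    filter_upwards [Ioo_mem_nhdsGT hxz] with y hy
    exact csInf_le (bddBelow_slopes hmono x) ⟨y, z, hy.1, hx.trans hy.1, hy.2, rfl⟩
  calc M A₀ V x * (z - x) ≤ (V z - V x) / (z - x) * (z - x) :=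
        mul_le_mul_of_nonneg_right hslope (by linarith)
    _ = V z - V x := div_mul_cancel₀ _ (by linarith : z - x ≠ 0)

lemma M_pos (hconv : ConvexOn ℝ (Set.Ioi A₀) V) (hmono : StrictMonoOn V (Set.Ioi A₀))
    {x : ℝ} (hx : A₀ < x) : 0 < M A₀ V x := by
  set w := (A₀ + x) / 2 with hw
  have hw1 : A₀ < w := by rw [hw]; linarith
  have hw2 : w < x := by rw [hw]; linarith
  have h1 := star_right hconv hw1 hw2
  have h2 : V w < V x := hmono (mem_Ioi.2 hw1) (mem_Ioi.2 hx) hw2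
  nlinarith

lemma M_le_slope (hconv : ConvexOn ℝ (Set.Ioi A₀) V)
    (hmono : StrictMonoOn V (Set.Ioi A₀)) {x z : ℝ}
    (hx : A₀ < x) (hxz : x < z) : M A₀ V x ≤ (V z - V x) / (z - x) :=
  (le_div_iff₀ (by linarith)).2 (star_left hconv hmono hx hxz)

lemma slope_le_M (hconv : ConvexOn ℝ (Set.Ioi A₀) V) {x z : ℝ}
    (hx : A₀ < x) (hxz : x < z) : (V z - V x) / (z - x) ≤ M A₀ V z :=
  (div_le_iff₀ (by linarith)).2 (star_right hconv hx hxz)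

lemma deriv_V_eq_M (hconv : ConvexOn ℝ (Set.Ioi A₀) V)
    (hmono : StrictMonoOn V (Set.Ioi A₀)) {A : ℝ} (hA : A₀ < A)
    (hd : DifferentiableAt ℝ V A) : M A₀ V A = deriv V A := by
  have h := hd.hasDerivAt
  rw [hasDerivAt_iff_tendsto_slope] at h
  have hr : Tendsto (slope V A) (𝓝[>] A) (𝓝 (deriv V A)) :=
    h.mono_left (nhdsWithin_mono _ (fun y hy => ne_of_gt hy))
  have hl : Tendsto (slope V A) (𝓝[<] A) (𝓝 (deriv V A)) :=
    h.mono_left (nhdsWithin_mono _ (fun y hy => ne_of_lt hy))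
  have h1 : M A₀ V A ≤ deriv V A := by
    apply ge_of_tendsto hr
    filter_upwards [self_mem_nhdsWithin] with z hz
    rw [slope_def_field]
    exact M_le_slope hconv hmono hA hz
  have h2 : deriv V A ≤ M A₀ V A := by
    apply le_of_tendsto hl
    filter_upwards [Ioo_mem_nhdsLT hA] with y hy
    rw [slope_comm, slope_def_field]
    exact slope_le_M hconv hy.1 hy.2
  linarith

lemma hasDerivAt_V (hconv : ConvexOn ℝ (Set.Ioi A₀) V)
    (hmono : StrictMonoOn V (Set.Ioi A₀)) {b : ℝ} (hb : A₀ < b)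
    (hM : ContinuousAt (M A₀ V) b) : HasDerivAt V (M A₀ V b) b := by
  rw [hasDerivAt_iff_tendsto_slope, ← nhdsLT_sup_nhdsGT b, tendsto_sup]
  have hMt : Tendsto (M A₀ V) (𝓝 b) (𝓝 (M A₀ V b)) := hM
  constructor
  · apply tendsto_of_tendsto_of_tendsto_of_le_of_le' (hMt.mono_left nhdsWithin_le_nhds)
      tendsto_const_nhds
    · filter_upwards [Ioo_mem_nhdsLT hb] with y hy
      rw [slope_comm, slope_def_field]
      exact M_le_slope hconv hmono hy.1 hy.2
    · filter_upwards [Ioo_mem_nhdsLT hb] with y hy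
      rw [slope_comm, slope_def_field]
      exact slope_le_M hconv hy.1 hy.2
  · apply tendsto_of_tendsto_of_tendsto_of_le_of_le' tendsto_const_nhds
      (hMt.mono_left nhdsWithin_le_nhds)
    · filter_upwards [self_mem_nhdsWithin] with z hz
      rw [slope_def_field]
      exact M_le_slope hconv hmono hb hz
    · filter_upwards [self_mem_nhdsWithin] with z hz
      rw [slope_def_field]
      exact slope_le_M hconv hb hz

lemma M_eq_barrier (hconv : ConvexOn ℝ (Set.Ioi A₀) V)
    (hmono : StrictMonoOn V (Set.Ioi A₀)) {c δ : ℝ} {f f' : ℝ → ℝ}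
    (hc : A₀ < c) (hδ : 0 < δ)
    (hf : ∀ x ∈ Set.Ioo (c - δ) (c + δ), HasDerivAt f (f' x) x)
    (hle : ∀ x ∈ Set.Ioo (c - δ) (c + δ), f x ≤ V x)
    (heq : f c = V c)
    (hMc : ContinuousAt (M A₀ V) c) : M A₀ V c = f' c := by
  have hcd : c ∈ Set.Ioo (c - δ) (c + δ) := by constructor <;> linarith
  have hd := hf c hcd
  rw [hasDerivAt_iff_tendsto_slope] at hd
  have hr : Tendsto (slope f c) (𝓝[>] c) (𝓝 (f' c)) :=
    hd.mono_left (nhdsWithin_mono _ (fun y hy => ne_of_gt hy))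
  have hl : Tendsto (slope f c) (𝓝[<] c) (𝓝 (f' c)) :=
    hd.mono_left (nhdsWithin_mono _ (fun y hy => ne_of_lt hy))
  have hMt : Tendsto (M A₀ V) (𝓝 c) (𝓝 (M A₀ V c)) := hMc
  have h1 : M A₀ V c ≤ f' c := by
    apply le_of_tendsto_of_tendsto (hMt.mono_left nhdsWithin_le_nhds) hl
    filter_upwards [Ioo_mem_nhdsLT
      (show max A₀ (c - δ) < c from max_lt hc (by linarith))] with y hy
    have hy1 : A₀ < y := lt_of_le_of_lt (le_max_left _ _) hy.1
    have hy2 : c - δ < y := lt_of_le_of_lt (le_max_right _ _) hy.1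
    have hyc : y < c := hy.2
    calc M A₀ V y ≤ (V c - V y) / (c - y) := M_le_slope hconv hmono hy1 hyc
      _ ≤ (f c - f y) / (c - y) := by
          have hfy : f y ≤ V y := hle y ⟨hy2, by linarith⟩
          gcongr <;> linarith
      _ = slope f c y := by rw [slope_comm, slope_def_field]
  have h2 : f' c ≤ M A₀ V c := by
    apply le_of_tendsto_of_tendsto hr (hMt.mono_left nhdsWithin_le_nhds)
    filter_upwards [Ioo_mem_nhdsGT (show c < c + δ by linarith)] with z hz
    calc slope f c z = (f z - f c) / (z - c) := slope_def_field f c z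
      _ ≤ (V z - V c) / (z - c) := by
          have hfz : f z ≤ V z := hle z ⟨by linarith [hz.1], hz.2⟩
          gcongr <;> linarith [hz.1]
      _ ≤ M A₀ V z := slope_le_M hconv hc hz.1
  linarith
lemma sum_range_cast (N : ℕ) : ∑ i ∈ Finset.range N, ((i:ℝ)+1) = N*(N+1)/2 := by
  induction N with
  | zero => simp
  | succ n ih => rw [Finset.sum_range_succ, ih]; push_cast; ring

lemma upper_taylor (hconv : ConvexOn ℝ (Set.Ioi A₀) V) {c x q : ℝ}
    (hc : A₀ < c) (hcx : c < x)
    (hM : ∀ t ∈ Set.Ioc c x, M A₀ V t ≤ M A₀ V c + q * (t - c)) :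
    V x - V c ≤ M A₀ V c * (x - c) + q * (x - c)^2 / 2 := by
  have key : ∀ n : ℕ, V x - V c ≤ M A₀ V c * (x - c)
      + q * (x - c)^2 * (1/2 + 1/(2*((n:ℝ)+1))) := by
    intro n
    set N : ℕ := n + 1 with hN
    have hNpos : (0:ℝ) < (N:ℝ) := by positivity
    set Δ : ℝ := (x - c) / N with hΔ
    have hΔpos : 0 < Δ := div_pos (by linarith) hNpos
    have hNΔ : (N:ℝ) * Δ = x - c := by rw [hΔ]; field_simp
    have hterm : ∀ i ∈ Finset.range N,
        V (c + ((i:ℝ)+1) * Δ) - V (c + (i:ℝ) * Δ) ≤ (M A₀ V c + q * (((i:ℝ)+1)*Δ)) * Δ := by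
      intro i hi
      have hiN : (i:ℝ) + 1 ≤ (N:ℝ) := by
        have := Finset.mem_range.1 hi
        exact_mod_cast Nat.succ_le_of_lt this
      have hnn : (0:ℝ) ≤ (i:ℝ) := Nat.cast_nonneg i
      have h1 : A₀ < c + (i:ℝ) * Δ := by nlinarith
      have h2 : c + (i:ℝ)*Δ < c + ((i:ℝ)+1)*Δ := by nlinarith
      have h3 := star_right hconv h1 h2
      have harg : c + ((i:ℝ)+1)*Δ ∈ Set.Ioc c x := by
        constructor
        · nlinarith
        · nlinarith
      have h4 := hM _ harg
      have hz : (c + ((i:ℝ)+1)*Δ) - (c + (i:ℝ)*Δ) = Δ := by ring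
      rw [hz] at h3
      have hq : (c + ((i:ℝ)+1)*Δ) - c = ((i:ℝ)+1)*Δ := by ring
      rw [hq] at h4
      calc V (c + ((i:ℝ)+1) * Δ) - V (c + (i:ℝ) * Δ)
          ≤ M A₀ V (c + ((i:ℝ)+1)*Δ) * Δ := h3
        _ ≤ (M A₀ V c + q * (((i:ℝ)+1)*Δ)) * Δ := by
            exact mul_le_mul_of_nonneg_right h4 hΔpos.le
    have tele : V x - V c
        = ∑ i ∈ Finset.range N, (V (c + ((i:ℝ)+1) * Δ) - V (c + (i:ℝ) * Δ)) := by
      have := Finset.sum_range_sub (fun i : ℕ => V (c + (i:ℝ) * Δ)) N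
      simp only [Nat.cast_add, Nat.cast_one] at this
      rw [this, hNΔ]
      norm_num
    calc V x - V c
        ≤ ∑ i ∈ Finset.range N, (M A₀ V c + q * (((i:ℝ)+1)*Δ)) * Δ := by
          rw [tele]; exact Finset.sum_le_sum hterm
      _ = ∑ i ∈ Finset.range N, (M A₀ V c * Δ + q * Δ^2 * ((i:ℝ)+1)) := by
          apply Finset.sum_congr rfl; intro i _; ring
      _ = (N:ℝ) * (M A₀ V c * Δ) + q * Δ^2 * ((N:ℝ)*((N:ℝ)+1)/2) := by
          rw [Finset.sum_add_distrib, Finset.sum_const, ← Finset.mul_sum, sum_range_cast]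
          simp [nsmul_eq_mul]
      _ = M A₀ V c * (x - c) + q * (x - c)^2 * (1/2 + 1/(2*((n:ℝ)+1))) := by
          have hNn : (N:ℝ) = (n:ℝ) + 1 := by rw [hN]; push_cast; ring
          rw [hΔ, hNn]
          have h1 : (n:ℝ) + 1 ≠ 0 := by positivity
          field_simp
  have hl : Tendsto (fun n : ℕ => M A₀ V c * (x-c) + q*(x-c)^2*(1/2 + 1/(2*((n:ℝ)+1))))
      atTop (𝓝 (M A₀ V c * (x-c) + q*(x-c)^2*(1/2 + 0))) := by
    apply Tendsto.const_add
    apply Tendsto.const_mul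
    apply Tendsto.const_add
    have h0 : Tendsto (fun n : ℕ => (1:ℝ) / ((n:ℝ) + 1)) atTop (𝓝 0) :=
      tendsto_one_div_add_atTop_nhds_zero_nat
    have := h0.const_mul (1/2 : ℝ)
    rw [mul_zero] at this
    apply this.congr
    intro n; field_simp
  have := ge_of_tendsto hl (Filter.Eventually.of_forall key)
  calc V x - V c ≤ M A₀ V c * (x-c) + q*(x-c)^2*(1/2 + 0) := this
    _ = M A₀ V c * (x - c) + q * (x - c)^2 / 2 := by ring
lemma lower_taylor {f f' : ℝ → ℝ} {c x p mm : ℝ} (hcx : c < x)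
    (hf : ∀ t ∈ Set.Icc c x, HasDerivAt f (f' t) t)
    (hcont : ContinuousOn f' (Set.Icc c x))
    (hb : ∀ t ∈ Set.Icc c x, p + mm * (t - c) ≤ f' t) :
    p * (x - c) + mm * (x - c)^2 / 2 ≤ f x - f c := by
  have huIcc : Set.uIcc c x = Set.Icc c x := Set.uIcc_of_le hcx.le
  have hFTC : ∫ t in c..x, f' t = f x - f c := by
    apply intervalIntegral.integral_eq_sub_of_hasDerivAt
    · intro t ht; exact hf t (huIcc ▸ ht)
    · exact (hcont.mono (by rw [huIcc])).intervalIntegrable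
  have hlin : ∫ t in c..x, (p + mm * (t - c)) = p * (x - c) + mm * (x - c)^2 / 2 := by
    have : ∀ t ∈ Set.uIcc c x,
        HasDerivAt (fun s => p * s + mm * (s - c)^2 / 2) (p + mm * (t - c)) t := by
      intro t _
      have h1 : HasDerivAt (fun s : ℝ => (s - c)^2) (2*(t-c)) t := by
        simpa using ((hasDerivAt_id t).sub_const c).fun_pow 2
      have := ((hasDerivAt_id t).const_mul p).add ((h1.const_mul (mm/2)))
      have heq : (fun s : ℝ => p * s + mm * (s - c)^2 / 2)
          = fun s => p * id s + mm/2 * (s - c)^2 := by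
        funext s; simp only [id]; ring
      rw [heq]
      exact this.congr_deriv (by ring)
    rw [intervalIntegral.integral_eq_sub_of_hasDerivAt this
      (Continuous.intervalIntegrable (by continuity) _ _)]
    ring
  rw [← hFTC, ← hlin]
  apply intervalIntegral.integral_mono_on hcx.le
    (Continuous.intervalIntegrable (by continuity) _ _)
    (hcont.mono (by rw [huIcc])).intervalIntegrable hb

lemma deriv_M_ge (hA₀ : 0 < A₀) (hconv : ConvexOn ℝ (Set.Ioi A₀) V)
    (hmono : StrictMonoOn V (Set.Ioi A₀)) {c δ D : ℝ} {f f' : ℝ → ℝ}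
    (hc : A₀ < c) (hδ : 0 < δ)
    (hf : ∀ x ∈ Set.Ioo (c-δ) (c+δ), HasDerivAt f (f' x) x)
    (hf'c : ContinuousOn f' (Set.Ioo (c-δ) (c+δ)))
    (hle : ∀ x ∈ Set.Ioo (c-δ) (c+δ), f x ≤ V x)
    (heq : f c = V c)
    (hpos : ∀ x ∈ Set.Ioo (c-δ) (c+δ), 0 < f' x)
    (hD : HasDerivAt (fun x => ((f' x)^2)⁻¹) D c) (hD2 : D ≤ -24*π/c^2)
    (hdM : DifferentiableAt ℝ (M A₀ V) c) :
    12*π*(M A₀ V c)^3/c^2 ≤ deriv (M A₀ V) c := by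
  have hcpos : 0 < c := hA₀.trans hc
  have hcd : c ∈ Set.Ioo (c-δ) (c+δ) := ⟨by linarith, by linarith⟩
  set p := f' c with hp
  have hppos : 0 < p := hpos c hcd
  have hMc : M A₀ V c = p := M_eq_barrier hconv hmono hc hδ hf hle heq hdM.continuousAt
  set mm := -D*p^3/2 with hmmdef
  have hmm : HasDerivAt f' mm c := by
    set g := fun x => ((f' x)^2)⁻¹ with hg
    have hgc : g c = (p^2)⁻¹ := rfl
    have hgcpos : 0 < g c := by rw [hgc]; positivity
    have hsq : HasDerivAt Real.sqrt (1/(2*Real.sqrt (g c))) (g c) :=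
      Real.hasDerivAt_sqrt (ne_of_gt hgcpos)
    have h1 : HasDerivAt (fun y => Real.sqrt (g y)) (1/(2*Real.sqrt (g c)) * D) c :=
      hsq.comp c hD
    have hsqrtgc : Real.sqrt (g c) = p⁻¹ := by
      rw [hgc, Real.sqrt_inv, Real.sqrt_sq hppos.le]
    have h2 : HasDerivAt (fun y => (Real.sqrt (g y))⁻¹)
        (-(1/(2*Real.sqrt (g c)) * D) / (Real.sqrt (g c))^2) c := by
      apply h1.inv
      rw [hsqrtgc]; positivity
    have hev : (fun y => (Real.sqrt (g y))⁻¹) =ᶠ[𝓝 c] f' := by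
      filter_upwards [isOpen_Ioo.mem_nhds hcd] with y hy
      have hfy := hpos y hy
      show (Real.sqrt (((f' y)^2)⁻¹))⁻¹ = f' y
      rw [Real.sqrt_inv, Real.sqrt_sq hfy.le, inv_inv]
    have h3 := h2.congr_of_eventuallyEq hev.symm
    exact h3.congr_deriv (by rw [hsqrtgc, hmmdef]; field_simp)
  have hc2 : 0 < c^2 := by positivity
  have hmge : 12*π*p^3/c^2 ≤ mm := by
    have hD3 : D * c^2 ≤ -24*π := by
      have := (le_div_iff₀ hc2).1 hD2
      linarith
    have hp3 : 0 < p^3 := by positivity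
    rw [hmmdef, div_le_iff₀ hc2]
    nlinarith [hD3, hp3]
  set q := deriv (M A₀ V) c with hq
  have hmq : mm ≤ q := by
    by_contra hlt
    push_neg at hlt
    set ε := (mm - q)/4 with hε
    have hεpos : 0 < ε := by rw [hε]; linarith
    have e1 : ∀ᶠ t in 𝓝 c, |M A₀ V t - M A₀ V c - (t - c)*q| ≤ ε*|t - c| := by
      have h := hdM.hasDerivAt
      rw [hasDerivAt_iff_isLittleO] at h
      filter_upwards [(Asymptotics.isLittleO_iff.1 h) hεpos] with t ht
      simpa [Real.norm_eq_abs, smul_eq_mul, mul_comm] using ht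
    have e2 : ∀ᶠ t in 𝓝 c, |f' t - f' c - (t - c)*mm| ≤ ε*|t - c| := by
      have h := hmm
      rw [hasDerivAt_iff_isLittleO] at h
      filter_upwards [(Asymptotics.isLittleO_iff.1 h) hεpos] with t ht
      simpa [Real.norm_eq_abs, smul_eq_mul, mul_comm] using ht
    have e3 : ∀ᶠ t in 𝓝 c, t ∈ Set.Ioo (c-δ) (c+δ) := isOpen_Ioo.mem_nhds hcd
    obtain ⟨η, hηpos, hη⟩ := Metric.eventually_nhds_iff.1 (e1.and (e2.and e3))
    set x := c + η/2 with hx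
    have hcx : c < x := by rw [hx]; linarith
    have hdistmem : ∀ t ∈ Set.Icc c x, dist t c < η := by
      intro t ht
      rw [Real.dist_eq, abs_of_nonneg (by linarith [ht.1])]
      have := ht.2
      rw [hx] at this
      linarith
    have hMbound : ∀ t ∈ Set.Ioc c x, M A₀ V t ≤ M A₀ V c + (q+ε)*(t - c) := by
      intro t ht
      obtain ⟨h1, _, _⟩ := hη (hdistmem t ⟨ht.1.le, ht.2⟩)
      rw [abs_of_nonneg (by linarith [ht.1] : (0:ℝ) ≤ t - c)] at h1
      have := abs_le.1 h1
      nlinarith [this.2]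
    have hf'bound : ∀ t ∈ Set.Icc c x, p + (mm - ε)*(t - c) ≤ f' t := by
      intro t ht
      obtain ⟨_, h2, _⟩ := hη (hdistmem t ht)
      rw [abs_of_nonneg (by linarith [ht.1] : (0:ℝ) ≤ t - c)] at h2
      have := abs_le.1 h2
      nlinarith [this.1, ht.1]
    have hup := upper_taylor hconv hc hcx hMbound
    have hlow := lower_taylor hcx
      (fun t ht => hf t (hη (hdistmem t ht)).2.2)
      (hf'c.mono (fun t ht => (hη (hdistmem t ht)).2.2))
      hf'bound
    have hxmem : x ∈ Set.Ioo (c-δ) (c+δ) := (hη (hdistmem x ⟨hcx.le, le_refl x⟩)).2.2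
    have hVf : f x - f c ≤ V x - V c := by
      have h1 := hle x hxmem
      linarith [heq.le, heq.ge]
    have hxc2 : 0 < (x - c)^2 := by
      have : x - c = η/2 := by rw [hx]; ring
      rw [this]; positivity
    rw [hMc] at hup
    have hchain := hlow.trans (hVf.trans hup)
    clear_value x ε q mm p
    have h2 : (mm - ε) * (x - c)^2 ≤ (q + ε) * (x - c)^2 := by linarith
    have h3 : mm - ε ≤ q + ε := le_of_mul_le_mul_right h2 hxc2
    linarith
  rw [hMc]
  exact le_trans hmge hmq
lemma integral_le_of_monotone {F ρ : ℝ → ℝ} {a b : ℝ} (hab : a < b)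
    (hF : Monotone F)
    (hFb : ∀ x, b ≤ x → F x = F b)
    (hρcont : ContinuousOn ρ (Set.Icc a b))
    (hρ0 : ∀ x ∈ Set.Icc a b, 0 ≤ ρ x)
    (hae : ∀ᵐ x, x ∈ Set.Ioo a b → DifferentiableAt ℝ F x ∧ ρ x ≤ deriv F x) :
    ∫ x in Set.Ioo a b, ρ x ≤ F b - F a := by
  have hFm : Measurable F := hF.measurable
  have hFba : (0:ℝ) ≤ F b - F a := by linarith [hF hab.le]
  set g : ℕ → ℝ → ℝ := fun n x => (F (x + 1/((n:ℝ)+1)) - F x) * ((n:ℝ)+1) with hg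
  have hgmeas : ∀ n, Measurable (g n) := fun n =>
    ((hFm.comp (measurable_add_const _)).sub hFm).mul_const _
  have hg0 : ∀ n x, 0 ≤ g n x := by
    intro n x
    have h1 : (0:ℝ) < 1/((n:ℝ)+1) := by positivity
    have h2 := sub_nonneg.2 (hF (show x ≤ x + 1/((n:ℝ)+1) by linarith))
    exact mul_nonneg h2 (by positivity)
  -- each ∫ g n ≤ F b - F a
  have key : ∀ n : ℕ, ∫ x in Set.Ioo a b, g n x ≤ F b - F a := by
    intro n
    set h : ℝ := 1/((n:ℝ)+1) with hh
    have hhpos : 0 < h := by positivity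
    have hInt : ∀ u v : ℝ, IntervalIntegrable F volume u v := fun u v =>
      Monotone.intervalIntegrable hF
    have hInt' : ∀ d u v : ℝ, IntervalIntegrable (fun x => F (x + d)) volume u v :=
      fun d u v => Monotone.intervalIntegrable (fun x y hxy => hF (by linarith))
    have h1 : ∫ x in Set.Ioo a b, g n x
        = (∫ x in a..b, (F (x + h) - F x)) * ((n:ℝ)+1) := by
      rw [intervalIntegral.integral_of_le hab.le, ← integral_Ioc_eq_integral_Ioo,
        ← integral_mul_const]
    have h2 : ∫ x in a..b, (F (x + h) - F x)
        = (∫ x in b..b+h, F x) - ∫ x in a..a+h, F x := by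
      rw [intervalIntegral.integral_sub (hInt' h a b) (hInt a b),
        intervalIntegral.integral_comp_add_right F h]
      have e1 : (∫ x in a+h..b+h, F x) = (∫ x in a+h..b, F x) + ∫ x in b..b+h, F x :=
        (intervalIntegral.integral_add_adjacent_intervals (hInt _ _) (hInt _ _)).symm
      have e2 : (∫ x in a..b, F x) = (∫ x in a..a+h, F x) + ∫ x in a+h..b, F x :=
        (intervalIntegral.integral_add_adjacent_intervals (hInt _ _) (hInt _ _)).symm
      rw [e1, e2]; ring
    have h3 : (∫ x in b..b+h, F x) = F b * h := by
      have : ∀ x ∈ Set.uIcc b (b+h), F x = F b := by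
        intro x hx
        rw [Set.uIcc_of_le (by linarith)] at hx
        exact hFb x hx.1
      rw [intervalIntegral.integral_congr this]
      simp [smul_eq_mul]; ring
    have h4 : F a * h ≤ ∫ x in a..a+h, F x := by
      have hconst : (∫ x in a..a+h, F a) = F a * h := by
        simp [smul_eq_mul]; ring
      rw [← hconst]
      apply intervalIntegral.integral_mono_on (by linarith)
        (intervalIntegrable_const) (hInt a (a+h))
      intro x hx
      exact hF hx.1
    have hn1 : ((n:ℝ)+1) * h = 1 := by rw [hh]; field_simp
    rw [h1, h2, h3]
    calc (F b * h - ∫ x in a..a+h, F x) * ((n:ℝ)+1)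
        ≤ (F b * h - F a * h) * ((n:ℝ)+1) := by
          apply mul_le_mul_of_nonneg_right (by linarith) (by positivity)
      _ = F b - F a := by
          have : (F b * h - F a * h) * ((n:ℝ)+1) = (F b - F a) * (((n:ℝ)+1) * h) := by ring
          rw [this, hn1, mul_one]
  -- Fatou
  have hρint : IntegrableOn ρ (Set.Ioo a b) volume := by
    have : IntervalIntegrable ρ volume a b := (hρcont.mono (by rw [Set.uIcc_of_le hab.le] : Set.uIcc a b ⊆ Set.Icc a b)).intervalIntegrable
    rw [intervalIntegrable_iff_integrableOn_Ioo_of_le hab.le] at this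
    exact this
  have hgint : ∀ n, IntegrableOn (g n) (Set.Ioo a b) volume := by
    intro n
    have e1 : IntegrableOn (fun x => F (x + 1/((n:ℝ)+1))) (Set.Ioo a b) volume := by
      have : IntervalIntegrable (fun x => F (x + 1/((n:ℝ)+1))) volume a b :=
        Monotone.intervalIntegrable (fun x y hxy => hF (by linarith))
      rw [intervalIntegrable_iff_integrableOn_Ioo_of_le hab.le] at this
      exact this
    have e2 : IntegrableOn F (Set.Ioo a b) volume := by
      have : IntervalIntegrable F volume a b := Monotone.intervalIntegrable hF
      rw [intervalIntegrable_iff_integrableOn_Ioo_of_le hab.le] at this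
      exact this
    exact (e1.sub e2).mul_const _
  have main : ENNReal.ofReal (∫ x in Set.Ioo a b, ρ x) ≤ ENNReal.ofReal (F b - F a) := by
    have hρnn : 0 ≤ᵐ[volume.restrict (Set.Ioo a b)] ρ :=
      (ae_restrict_iff' measurableSet_Ioo).2
        (Filter.Eventually.of_forall fun x hx => hρ0 x (Set.Ioo_subset_Icc_self hx))
    calc ENNReal.ofReal (∫ x in Set.Ioo a b, ρ x)
        = ∫⁻ x in Set.Ioo a b, ENNReal.ofReal (ρ x) :=
          ofReal_integral_eq_lintegral_ofReal hρint hρnn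
      _ ≤ ∫⁻ x in Set.Ioo a b, Filter.liminf (fun n => ENNReal.ofReal (g n x)) atTop := by
          apply lintegral_mono_ae
          filter_upwards [ae_restrict_of_ae hae, ae_restrict_mem measurableSet_Ioo]
            with x hx' hxm
          obtain ⟨hdiff, hρd⟩ := hx' hxm
          have htend : Tendsto (fun n => g n x) atTop (𝓝 (deriv F x)) := by
            have hd := hdiff.hasDerivAt
            rw [hasDerivAt_iff_tendsto_slope] at hd
            have hyseq : Tendsto (fun n : ℕ => x + 1/((n:ℝ)+1)) atTop (𝓝[≠] x) := by
              rw [tendsto_nhdsWithin_iff]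
              constructor
              · simpa using (tendsto_one_div_add_atTop_nhds_zero_nat).const_add x
              · apply Filter.Eventually.of_forall
                intro n
                have : (0:ℝ) < 1/((n:ℝ)+1) := by positivity
                simp only [Set.mem_compl_iff, Set.mem_singleton_iff]
                intro hcon
                nlinarith [congrArg (fun t => t - x) hcon]
            have := hd.comp hyseq
            apply this.congr
            intro n
            have hne : (0:ℝ) < 1/((n:ℝ)+1) := by positivity
            show slope F x (x + 1/((n:ℝ)+1)) = g n x
            rw [slope_def_field]
            rw [hg]
            simp only [add_sub_cancel_left]
            rw [div_div_eq_mul_div, div_one, mul_comm]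
          have hlim : Filter.liminf (fun n => ENNReal.ofReal (g n x)) atTop
              = ENNReal.ofReal (deriv F x) :=
            ((ENNReal.continuous_ofReal.tendsto _).comp htend).liminf_eq
          rw [hlim]
          exact ENNReal.ofReal_le_ofReal hρd
      _ ≤ Filter.liminf (fun n => ∫⁻ x in Set.Ioo a b, ENNReal.ofReal (g n x)) atTop :=
          lintegral_liminf_le fun n => (hgmeas n).ennreal_ofReal
      _ ≤ ENNReal.ofReal (F b - F a) := by
          apply Filter.liminf_le_of_frequently_le'
          apply Filter.Frequently.of_forall
          intro n
          rw [← ofReal_integral_eq_lintegral_ofReal (hgint n)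
            ((ae_restrict_iff' measurableSet_Ioo).2
              (Filter.Eventually.of_forall fun x _ => hg0 n x))]
          exact ENNReal.ofReal_le_ofReal (key n)
  exact (ENNReal.ofReal_le_ofReal_iff hFba).1 main

lemma G_comparison (hA₀ : 0 < A₀) (hconv : ConvexOn ℝ (Set.Ioi A₀) V)
    (hmono : StrictMonoOn V (Set.Ioi A₀))
    (hbarrier : ∀ Ahat : ℝ, A₀ < Ahat → ∃ δ > (0:ℝ), ∃ f f' : ℝ → ℝ,
      (∀ x ∈ Set.Ioo (Ahat - δ) (Ahat + δ), HasDerivAt f (f' x) x) ∧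
      ContinuousOn f' (Set.Ioo (Ahat - δ) (Ahat + δ)) ∧
      (∀ x ∈ Set.Ioo (Ahat - δ) (Ahat + δ), f x ≤ V x) ∧
      f Ahat = V Ahat ∧
      (∀ x ∈ Set.Ioo (Ahat - δ) (Ahat + δ), 0 < f' x) ∧
      ∃ D : ℝ, HasDerivAt (fun x => ((f' x) ^ 2)⁻¹) D Ahat ∧ D ≤ -24 * π / Ahat ^ 2)
    {a b : ℝ} (ha : A₀ < a) (hab : a < b) :
    ((M A₀ V b)^2)⁻¹ + 24*π/a - 24*π/b ≤ ((M A₀ V a)^2)⁻¹ := by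
  have hapos : 0 < a := hA₀.trans ha
  have hbpos : 0 < b := hapos.trans hab
  set G : ℝ → ℝ := fun x => ((M A₀ V x)^2)⁻¹ with hG
  set cl : ℝ → ℝ := fun x => min b (max a x) with hcl
  set F : ℝ → ℝ := fun x => -G (cl x) with hF
  have hclmem : ∀ x, cl x ∈ Set.Icc a b := by
    intro x
    constructor
    · exact le_min hab.le (le_max_left a x)
    · exact min_le_left _ _
  have hGanti : ∀ u v : ℝ, A₀ < u → u ≤ v → G v ≤ G u := by
    intro u v hu huv
    have h1 : 0 < M A₀ V u := M_pos hconv hmono hu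
    have h2 : M A₀ V u ≤ M A₀ V v := M_mono hmono huv
    rw [hG]
    apply inv_anti₀ (by positivity)
    nlinarith
  have hFmono : Monotone F := by
    intro x y hxy
    rw [hF]
    simp only [neg_le_neg_iff]
    apply hGanti _ _ (ha.trans_le (hclmem x).1)
    exact min_le_min (le_refl b) (max_le_max (le_refl a) hxy)
  have hclb : ∀ x, b ≤ x → cl x = b := by
    intro x hx
    rw [hcl]
    simp only
    rw [max_eq_right (hab.le.trans hx), min_eq_left hx]
  have hcla : cl a = a := by
    rw [hcl]; simp only [max_self]
    exact min_eq_right hab.le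
  have hFb : ∀ x, b ≤ x → F x = F b := by
    intro x hx
    rw [hF]; simp only
    rw [hclb x hx, hclb b le_rfl]
  have hFa : F a = -G a := by rw [hF]; simp only [hcla]
  have hFbval : F b = -G b := by rw [hF]; simp only [hclb b le_rfl]
  set ρ : ℝ → ℝ := fun x => 24*π/x^2 with hρ
  have hρcont : ContinuousOn ρ (Set.Icc a b) := by
    apply ContinuousOn.div continuousOn_const (by fun_prop)
    intro x hx
    have : 0 < x := lt_of_lt_of_le hapos hx.1
    positivity
  have hρ0 : ∀ x ∈ Set.Icc a b, 0 ≤ ρ x := by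
    intro x hx
    have : 0 < x := lt_of_lt_of_le hapos hx.1
    rw [hρ]; positivity
  have hae : ∀ᵐ x, x ∈ Set.Ioo a b → DifferentiableAt ℝ F x ∧ ρ x ≤ deriv F x := by
    filter_upwards [(M_mono hmono).ae_differentiableAt] with x hdM hmem
    have hxA : A₀ < x := ha.trans hmem.1
    have hxpos : 0 < x := hA₀.trans hxA
    have hu : 0 < M A₀ V x := M_pos hconv hmono hxA
    obtain ⟨δ, hδ, f, f', hf, hf'c, hle, heq, hfpos, D, hD, hD2⟩ := hbarrier x hxA
    have hqge : 12*π*(M A₀ V x)^3/x^2 ≤ deriv (M A₀ V) x :=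
      deriv_M_ge hA₀ hconv hmono hxA hδ hf hf'c hle heq hfpos hD
        (by convert hD2 using 2) hdM
    set q := deriv (M A₀ V) x with hqd
    have hne : (M A₀ V x)^2 ≠ 0 := by positivity
    have hGd : HasDerivAt G (-(2 * M A₀ V x * q) / ((M A₀ V x)^2)^2) x := by
      have h2 := (hdM.hasDerivAt).pow 2
      have h3 := h2.inv hne
      exact h3.congr_deriv (by simp only [Pi.pow_apply, ← hqd]; push_cast; ring)
    have hev : F =ᶠ[𝓝 x] (fun y => -G y) := by
      filter_upwards [isOpen_Ioo.mem_nhds hmem] with y hy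
      rw [hF]; simp only [neg_inj]
      congr 1
      rw [hcl]; simp only
      rw [max_eq_right hy.1.le, min_eq_right hy.2.le]
    have hFd : HasDerivAt F (2 * M A₀ V x * q / ((M A₀ V x)^2)^2) x := by
      have := (hGd.neg).congr_of_eventuallyEq hev
      exact this.congr_deriv (by ring)
    refine ⟨hFd.differentiableAt, ?_⟩
    rw [hFd.deriv, hρ]
    have hq2 : 12*π*(M A₀ V x)^3 ≤ q * x^2 := by
      rw [div_le_iff₀ (by positivity)] at hqge
      linarith
    rw [div_le_div_iff₀ (by positivity) (by positivity)]
    nlinarith [mul_le_mul_of_nonneg_left hq2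
      (le_of_lt (by positivity : (0:ℝ) < 2 * M A₀ V x)), hu]
  have hint := integral_le_of_monotone hab hFmono hFb hρcont hρ0 hae
  have hcalc : ∫ x in Set.Ioo a b, ρ x = 24*π/a - 24*π/b := by
    rw [← integral_Ioc_eq_integral_Ioo, ← intervalIntegral.integral_of_le hab.le]
    have hFTC : ∀ t ∈ Set.uIcc a b, HasDerivAt (fun y => -(24*π)/y) (ρ t) t := by
      intro t ht
      rw [Set.uIcc_of_le hab.le] at ht
      have htpos : 0 < t := lt_of_lt_of_le hapos ht.1
      have h1 := (hasDerivAt_inv (ne_of_gt htpos)).const_mul (-(24*π))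
      have heqf : (fun y : ℝ => -(24*π)/y) = fun y => -(24*π) * y⁻¹ := by
        funext y; ring
      rw [heqf, hρ]
      exact h1.congr_deriv (by show -(24*π) * -(t^2)⁻¹ = 24*π/t^2; ring)
    have hρint : IntervalIntegrable ρ volume a b := by
      apply ContinuousOn.intervalIntegrable
      rw [Set.uIcc_of_le hab.le]
      exact hρcont
    rw [intervalIntegral.integral_eq_sub_of_hasDerivAt hFTC hρint]
    field_simp
    ring
  rw [hcalc, hFbval, hFa] at hint
  have : G b + 24*π/a - 24*π/b ≤ G a := by linarith
  exact this
end BDI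

open BDI

/-- integrating the barrier-sense differential inequality
`(d/dA)[V'(A)^(-2)] <= -24pi A^-2` against the asymptotic normalization
`V'(A)^(-2) -> 4` yields `V'(A)^(-2) >= 4 + 24pi A^-1` almost everywhere. -/
theorem barrier_differential_inequality_integration (A₀ : ℝ) (hA₀ : 0 < A₀)
    (V : ℝ → ℝ)
    (hconv : ConvexOn ℝ (Set.Ioi A₀) V)
    (hmono : StrictMonoOn V (Set.Ioi A₀))
    (hbarrier : ∀ Ahat : ℝ, A₀ < Ahat → ∃ δ > (0:ℝ), ∃ f f' : ℝ → ℝ,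
      (∀ x ∈ Set.Ioo (Ahat - δ) (Ahat + δ), HasDerivAt f (f' x) x) ∧
      ContinuousOn f' (Set.Ioo (Ahat - δ) (Ahat + δ)) ∧
      (∀ x ∈ Set.Ioo (Ahat - δ) (Ahat + δ), f x ≤ V x) ∧
      f Ahat = V Ahat ∧
      (∀ x ∈ Set.Ioo (Ahat - δ) (Ahat + δ), 0 < f' x) ∧
      ∃ D : ℝ, HasDerivAt (fun x => ((f' x) ^ 2)⁻¹) D Ahat ∧ D ≤ -24 * π / Ahat ^ 2)
    (hlim : ∀ ε > (0:ℝ), ∃ B : ℝ, ∀ A ≥ B, DifferentiableAt ℝ V A →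
      |((deriv V A) ^ 2)⁻¹ - 4| < ε) :
    ∀ᵐ A ∂(volume : Measure ℝ), A₀ < A → DifferentiableAt ℝ V A →
      4 + 24 * π / A ≤ ((deriv V A) ^ 2)⁻¹ := by
  apply ae_of_all
  intro A hA hdiff
  have hApos : 0 < A := hA₀.trans hA
  have hpi := Real.pi_pos
  have hMA : M A₀ V A = deriv V A := deriv_V_eq_M hconv hmono hA hdiff
  rw [← hMA]
  apply le_of_forall_pos_le_add
  intro ε hε
  obtain ⟨B, hB⟩ := hlim (ε/2) (by linarith)
  set c := max (max A B) (48*π/ε) with hc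
  obtain ⟨b, hbc, hdMb⟩ : ∃ b, c < b ∧ DifferentiableAt ℝ (M A₀ V) b := by
    by_contra hcon
    push_neg at hcon
    have hsub : Set.Ioi c ⊆ {x | ¬ DifferentiableAt ℝ (M A₀ V) x} :=
      fun x hx => hcon x hx
    have hnull : volume {x | ¬ DifferentiableAt ℝ (M A₀ V) x} = 0 := by
      have := (M_mono hmono).ae_differentiableAt
      rwa [ae_iff] at this
    have h0 : volume (Set.Ioi c) = 0 := measure_mono_null hsub hnull
    rw [Real.volume_Ioi] at h0
    exact ENNReal.top_ne_zero h0
  have hAb : A < b := lt_of_le_of_lt ((le_max_left A B).trans (le_max_left _ _)) hbc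
  have hbA₀ : A₀ < b := hA.trans hAb
  have hVb : HasDerivAt V (M A₀ V b) b := hasDerivAt_V hconv hmono hbA₀ hdMb.continuousAt
  have hBb : B ≤ b := ((le_max_right A B).trans (le_max_left _ _)).trans hbc.le
  have hblim := hB b hBb hVb.differentiableAt
  rw [hVb.deriv] at hblim
  have h1 : 4 - ε/2 ≤ ((M A₀ V b)^2)⁻¹ := by
    have := abs_lt.1 hblim
    linarith [this.1]
  have hcomp := G_comparison hA₀ hconv hmono hbarrier hA hAb
  have hb48 : 48*π/ε < b := lt_of_le_of_lt (le_max_right _ _) hbc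
  have hbpos : 0 < b := lt_trans (by positivity) hb48
  have h2 : 24*π/b < ε/2 := by
    rw [div_lt_iff₀ hbpos]
    rw [div_lt_iff₀ hε] at hb48
    linarith
  linarith
end
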